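/- Let L>0, let 0 ≤ x₁ < x₂ < ... < x_n < 2L, and let f : ℝ → ℂ be 2L-periodic, three times continuously differentiable on each open interval between consecutive points of the set {x_j + 2Lm : 1 ≤ j ≤ n, m ∈ ℤ}, with f and its first three derivatives having finite one-sided limits at each such point. Set δ_j = f(x_j⁺) − f(x_j⁻), and assume that at every discontinuity point the one-sided derivatives coincide: f'(x_j⁺) = f'(x_j⁻) for all j. Then there exists C > 0 such that for every nonzero integer k, |f̂_k − (1/(2πik)) Σ_{j=1}^n δ_j e^{−iπ k x_j/L}| ≤ C/|k|³. -/

import Mathlib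

set_option autoImplicit false

open MeasureTheory Filter Topology

section Helpers
open Set intervalIntegral
set_option maxHeartbeats 1000000


lemma tendsto_intervalIntegrable {a b : ℝ} (hab : a < b) (g : ℝ → ℂ)
    (hg : ContinuousOn g (Set.Ioo a b)) {ga gb : ℂ}
    (ha : Tendsto g (𝓝[>] a) (𝓝 ga)) (hb : Tendsto g (𝓝[<] b) (𝓝 gb)) :
    IntervalIntegrable g volume a b := by
  classical
  set F : ℝ → ℂ := Function.update (Function.update g a ga) b gb with hF
  have hcont : ContinuousOn F (Set.Icc a b) := by
    rw [hF, continuousOn_update_iff, continuousOn_update_iff, Set.Icc_sdiff_right,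
      Set.Ico_sdiff_left]
    refine ⟨⟨hg, ?_⟩, ?_⟩
    · exact fun _ => ha.mono_left (nhdsWithin_mono _ Set.Ioo_subset_Ioi_self)
    · rintro -
      refine (hb.congr' ?_).mono_left (nhdsWithin_mono _ Set.Ico_subset_Iio_self)
      filter_upwards [Ioo_mem_nhdsLT_of_mem (Set.right_mem_Ioc.2 hab)] with z hz using
        (Function.update_of_ne hz.1.ne' _ _).symm
  have hFi : IntervalIntegrable F volume a b :=
    ContinuousOn.intervalIntegrable (by rwa [Set.uIcc_of_le hab.le])
  refine hFi.congr_ae ?_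
  have hae : ∀ᵐ z ∂(volume : Measure ℝ), F z = g z := by
    have ha' : {a}ᶜ ∈ ae (volume : Measure ℝ) := compl_mem_ae_iff.mpr (measure_singleton a)
    have hb' : {b}ᶜ ∈ ae (volume : Measure ℝ) := compl_mem_ae_iff.mpr (measure_singleton b)
    filter_upwards [ha', hb'] with z hza hzb
    simp only [hF, Function.update_of_ne (by simpa using hzb),
      Function.update_of_ne (by simpa using hza)]
  exact ae_restrict_of_ae hae

lemma hasDerivAt_cexp_mul (c : ℂ) (x : ℝ) :
    HasDerivAt (fun y : ℝ => Complex.exp (c * y)) (c * Complex.exp (c * x)) x := by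
  have h1 : HasDerivAt (fun y : ℝ => (y : ℂ)) 1 x := Complex.ofRealCLM.hasDerivAt
  have h2 := (h1.const_mul c).cexp
  simpa [mul_comm] using h2

lemma ibp_step {a b : ℝ} (hab : a < b) (g : ℝ → ℂ) (c : ℂ)
    (hg : ∀ y ∈ Set.Ioo a b, HasDerivAt g (deriv g y) y)
    (hg' : ContinuousOn (deriv g) (Set.Ioo a b))
    {ga gb ga' gb' : ℂ}
    (ha : Tendsto g (𝓝[>] a) (𝓝 ga)) (hb : Tendsto g (𝓝[<] b) (𝓝 gb))
    (ha' : Tendsto (deriv g) (𝓝[>] a) (𝓝 ga')) (hb' : Tendsto (deriv g) (𝓝[<] b) (𝓝 gb')) :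
    c * ∫ y in a..b, g y * Complex.exp (c * y)
      = (gb * Complex.exp (c * b) - ga * Complex.exp (c * a))
        - ∫ y in a..b, deriv g y * Complex.exp (c * y) := by
  set e : ℝ → ℂ := fun y => Complex.exp (c * y) with he
  have hgc : ContinuousOn g (Set.Ioo a b) := fun y hy => (hg y hy).continuousAt.continuousWithinAt
  have hec : ∀ t : ℝ, ∀ l ≤ 𝓝 t, Tendsto e l (𝓝 (e t)) := fun t l hl =>
    ((hasDerivAt_cexp_mul c t).continuousAt.tendsto).mono_left hl
  have int1 : IntervalIntegrable (fun y => g y * e y) volume a b :=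
    tendsto_intervalIntegrable hab _
      (hgc.mul (fun y _ => ((hasDerivAt_cexp_mul c y).continuousAt.continuousWithinAt)))
      (ha.mul (hec a _ nhdsWithin_le_nhds)) (hb.mul (hec b _ nhdsWithin_le_nhds))
  have int2 : IntervalIntegrable (fun y => deriv g y * e y) volume a b :=
    tendsto_intervalIntegrable hab _
      (hg'.mul (fun y _ => ((hasDerivAt_cexp_mul c y).continuousAt.continuousWithinAt)))
      (ha'.mul (hec a _ nhdsWithin_le_nhds)) (hb'.mul (hec b _ nhdsWithin_le_nhds))
  have int3 : IntervalIntegrable (fun y => deriv g y * e y + c * (g y * e y)) volume a b := by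
    have := int2.add (int1.const_mul c)
    simpa using this
  have hF : ∀ y ∈ Set.Ioo a b,
      HasDerivAt (fun z => g z * e z) (deriv g y * e y + c * (g y * e y)) y := by
    intro y hy
    have := (hg y hy).mul (hasDerivAt_cexp_mul c y)
    exact this.congr_deriv (by ring)
  have hFa : Tendsto (fun z => g z * e z) (𝓝[>] a) (𝓝 (ga * e a)) :=
    ha.mul (hec a _ nhdsWithin_le_nhds)
  have hFb : Tendsto (fun z => g z * e z) (𝓝[<] b) (𝓝 (gb * e b)) :=
    hb.mul (hec b _ nhdsWithin_le_nhds)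
  have key := integral_eq_sub_of_hasDerivAt_of_tendsto hab hF int3 hFa hFb
  have split : (∫ y in a..b, (deriv g y * e y + c * (g y * e y)))
      = (∫ y in a..b, deriv g y * e y) + c * ∫ y in a..b, g y * e y := by
    rw [integral_add int2 (int1.const_mul c), intervalIntegral.integral_const_mul]
  rw [split] at key
  linear_combination key

lemma ibp_chain (n : ℕ) (p : ℕ → ℝ) (hp : ∀ i < n, p i < p (i + 1))
    (g : ℝ → ℂ) (c : ℂ)
    (hg : ∀ i < n, ∀ y ∈ Set.Ioo (p i) (p (i + 1)), HasDerivAt g (deriv g y) y)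
    (hg' : ∀ i < n, ContinuousOn (deriv g) (Set.Ioo (p i) (p (i + 1))))
    (gl gr gl' gr' : ℕ → ℂ)
    (hgl : ∀ i ≤ n, Tendsto g (𝓝[<] (p i)) (𝓝 (gl i)))
    (hgr : ∀ i ≤ n, Tendsto g (𝓝[>] (p i)) (𝓝 (gr i)))
    (hgl' : ∀ i ≤ n, Tendsto (deriv g) (𝓝[<] (p i)) (𝓝 (gl' i)))
    (hgr' : ∀ i ≤ n, Tendsto (deriv g) (𝓝[>] (p i)) (𝓝 (gr' i))) :
    c * ∫ y in (p 0)..(p n), g y * Complex.exp (c * y)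
      = (∑ i ∈ Finset.range n,
          (gl (i + 1) * Complex.exp (c * p (i + 1)) - gr i * Complex.exp (c * p i)))
        - ∫ y in (p 0)..(p n), deriv g y * Complex.exp (c * y) := by
  have hgc : ∀ i < n, ContinuousOn g (Set.Ioo (p i) (p (i + 1))) :=
    fun i hi y hy => (hg i hi y hy).continuousAt.continuousWithinAt
  have he : ∀ y : ℝ, ContinuousAt (fun z : ℝ => Complex.exp (c * z)) y :=
    fun y => (hasDerivAt_cexp_mul c y).continuousAt
  have int1 : ∀ i < n, IntervalIntegrable (fun y => g y * Complex.exp (c * y)) volume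
      (p i) (p (i+1)) := by
    intro i hi
    exact tendsto_intervalIntegrable (hp i hi) _
      ((hgc i hi).mul (fun y _ => (he y).continuousWithinAt))
      ((hgr i (le_of_lt hi)).mul (((he (p i)).tendsto).mono_left nhdsWithin_le_nhds))
      ((hgl (i+1) hi).mul (((he (p (i+1))).tendsto).mono_left nhdsWithin_le_nhds))
  have int2 : ∀ i < n, IntervalIntegrable (fun y => deriv g y * Complex.exp (c * y)) volume
      (p i) (p (i+1)) := by
    intro i hi
    exact tendsto_intervalIntegrable (hp i hi) _
      ((hg' i hi).mul (fun y _ => (he y).continuousWithinAt))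
      ((hgr' i (le_of_lt hi)).mul (((he (p i)).tendsto).mono_left nhdsWithin_le_nhds))
      ((hgl' (i+1) hi).mul (((he (p (i+1))).tendsto).mono_left nhdsWithin_le_nhds))
  have hsum1 := intervalIntegral.sum_integral_adjacent_intervals (μ := volume)
      (a := p) (n := n) (fun i hi => int1 i hi)
  have hsum2 := intervalIntegral.sum_integral_adjacent_intervals (μ := volume)
      (a := p) (n := n) (fun i hi => int2 i hi)
  rw [← hsum1, ← hsum2, Finset.mul_sum, ← Finset.sum_sub_distrib]
  refine Finset.sum_congr rfl fun i hi => ?_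
  have hi' := Finset.mem_range.mp hi
  exact ibp_step (hp i hi') g c (hg i hi') (hg' i hi')
    (hgr i hi'.le) (hgl (i+1) hi') (hgr' i hi'.le) (hgl' (i+1) hi')

lemma sum_shift_eq {n : ℕ} (A : ℕ → ℂ) (h : A n = A 0) :
    ∑ i ∈ Finset.range n, A (i + 1) = ∑ i ∈ Finset.range n, A i := by
  have h1 := Finset.sum_range_succ' A n
  rw [Finset.sum_range_succ, h] at h1
  linear_combination - h1

lemma key_algebra (c d S I0 Bk I3 F : ℂ) (hc : c ≠ 0) (hd : d ≠ 0)
    (hI0c : c ^ 3 * I0 = -(S * c ^ 2) + (Bk - I3))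
    (hfour : F = (1 / (2 * d)) * I0) :
    F - 1 / (-(2 * d * c)) * S = (Bk - I3) / (2 * d * c ^ 3) := by
  have hI0v : I0 = -S / c + (Bk - I3) / c ^ 3 := by
    rw [div_add_div _ _ hc (pow_ne_zero 3 hc), eq_div_iff (mul_ne_zero hc (pow_ne_zero 3 hc))]
    linear_combination c * hI0c
  rw [hfour, hI0v, eq_div_iff (by
    exact mul_ne_zero (mul_ne_zero two_ne_zero hd) (pow_ne_zero 3 hc))]
  field_simp
  ring

end Helpers

set_option maxHeartbeats 1000000

/-- The `k`-th Fourier coefficient of a `2L`-periodic function: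
`f̂ₖ = (1/(2L)) ∫₀^{2L} f(x) e^{−iπkx/L} dx`. -/
noncomputable def fourierCoeff2L (L : ℝ) (f : ℝ → ℂ) (k : ℤ) : ℂ :=
  (1 / (2 * L : ℂ)) * ∫ x in (0:ℝ)..(2 * L),
    f x * Complex.exp (-(Real.pi * Complex.I * k * x) / L)

/-- For a `2L`-periodic function, piecewise `C³` with jump discontinuities at the points
`x_j + 2Lm` at which the one-sided first derivatives coincide, the Fourier coefficients
satisfy `f̂ₖ = (1/(2πik)) Σⱼ δⱼ e^{−iπk xⱼ/L} + O(1/|k|³)`. -/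
theorem fourierCoeff_jump_asymptotics_matchedDerivs
    (L : ℝ) (hL : 0 < L) (n : ℕ) (hn : 0 < n) (x : Fin n → ℝ)
    (hxmono : StrictMono x) (hxrange : ∀ j, 0 ≤ x j ∧ x j < 2 * L)
    (f : ℝ → ℂ) (hper : ∀ y, f (y + 2 * L) = f y)
    (D : Set ℝ) (hD : D = {y : ℝ | ∃ j : Fin n, ∃ m : ℤ, y = x j + 2 * L * m})
    (hsmooth : ContDiffOn ℝ 3 f Dᶜ)
    (hlim : ∀ d ∈ D,
      ∀ g ∈ ({f, deriv f, deriv (deriv f), deriv (deriv (deriv f))} : Set (ℝ → ℂ)),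
      (∃ l : ℂ, Tendsto g (nhdsWithin d (Set.Iio d)) (nhds l)) ∧
      (∃ r : ℂ, Tendsto g (nhdsWithin d (Set.Ioi d)) (nhds r)))
    (fl fr : Fin n → ℂ)
    (hfl : ∀ j, Tendsto f (nhdsWithin (x j) (Set.Iio (x j))) (nhds (fl j)))
    (hfr : ∀ j, Tendsto f (nhdsWithin (x j) (Set.Ioi (x j))) (nhds (fr j)))
    (hderiv_match : ∀ d ∈ D, ∃ m : ℂ,
      Tendsto (deriv f) (nhdsWithin d (Set.Iio d)) (nhds m) ∧
      Tendsto (deriv f) (nhdsWithin d (Set.Ioi d)) (nhds m)) :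
    ∃ C > 0, ∀ k : ℤ, k ≠ 0 →
      ‖fourierCoeff2L L f k -
        (1 / (2 * Real.pi * Complex.I * k)) *
          ∑ j, (fr j - fl j) * Complex.exp (-(Real.pi * Complex.I * k * (x j)) / L)‖
        ≤ C / |(k : ℝ)| ^ 3 := by
  classical
  have hL0 : L ≠ 0 := ne_of_gt hL
  set x0 : Fin n := ⟨0, hn⟩ with hx0
  set p : ℕ → ℝ := fun i => if h : i < n then x ⟨i, h⟩ else x x0 + 2 * L with hpdef
  have hp0 : p 0 = x x0 := by simp [hpdef, hn, hx0]
  have hpn : p n = x x0 + 2 * L := by simp [hpdef]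
  have hple : ∀ j : Fin n, x x0 ≤ x j := fun j =>
    hxmono.monotone (by exact Fin.mk_le_of_le_val (Nat.zero_le _))
  have hplt : ∀ i < n, p i < p (i + 1) := by
    intro i hi
    by_cases h : i + 1 < n
    · simp only [hpdef, dif_pos hi, dif_pos h]
      exact hxmono (by exact Fin.mk_lt_mk.mpr (lt_add_one i))
    · simp only [hpdef, dif_pos hi, dif_neg h]
      have h1 := (hxrange ⟨i, hi⟩).2
      have h2 := (hxrange x0).1
      linarith
  have hmemD : ∀ i ≤ n, p i ∈ D := by
    intro i hi
    rw [hD]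
    by_cases h : i < n
    · exact ⟨⟨i, h⟩, 0, by simp [hpdef, dif_pos h]⟩
    · exact ⟨x0, 1, by simp only [hpdef, dif_neg h]; push_cast; ring⟩
  have hsub : ∀ i < n, Set.Ioo (p i) (p (i + 1)) ⊆ Dᶜ := by
    intro i hi y hy hyD
    rw [hD] at hyD
    obtain ⟨j, m, rfl⟩ := hyD
    have hxj0 : 0 ≤ x j := (hxrange j).1
    have hxj2 : x j < 2 * L := (hxrange j).2
    have h0j : x x0 ≤ x j := hple j
    have hpi0 : 0 ≤ p i := by
      simp only [hpdef, dif_pos hi]; exact (hxrange ⟨i, hi⟩).1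
    have hpik : p (i + 1) ≤ x x0 + 2 * L := by
      by_cases h : i + 1 < n
      · simp only [hpdef, dif_pos h]
        have := (hxrange ⟨i + 1, h⟩).2
        have := (hxrange x0).1
        linarith
      · simp only [hpdef, dif_neg h]; exact le_rfl
    have hy1 := hy.1
    have hy2 := hy.2
    have hm0 : m = 0 := by
      have h1 : (-1 : ℝ) < (m : ℝ) := by nlinarith
      have h2 : (m : ℝ) < 1 := by nlinarith
      have h1' : (-1 : ℤ) < m := by exact_mod_cast h1
      have h2' : m < 1 := by exact_mod_cast h2
      omega
    subst hm0
    simp only [Int.cast_zero, mul_zero, add_zero] at hy1 hy2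
    rw [hpdef] at hy1 hy2
    simp only [dif_pos hi] at hy1
    have hij : i < (j : ℕ) := by
      have : (⟨i, hi⟩ : Fin n) < j := hxmono.lt_iff_lt.mp hy1
      exact this
    by_cases h : i + 1 < n
    · simp only [dif_pos h] at hy2
      have : (j : ℕ) < i + 1 := hxmono.lt_iff_lt.mp hy2
      omega
    · have hjn : (j : ℕ) < n := j.isLt
      omega
  -- smoothness per interval
  have hf3 : ∀ i < n, ContDiffOn ℝ 3 f (Set.Ioo (p i) (p (i + 1))) :=
    fun i hi => hsmooth.mono (hsub i hi)
  have hd1 : ∀ i < n, ContDiffOn ℝ 2 (deriv f) (Set.Ioo (p i) (p (i + 1))) :=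
    fun i hi => (hf3 i hi).deriv_of_isOpen isOpen_Ioo (by norm_num)
  have hd2 : ∀ i < n, ContDiffOn ℝ 1 (deriv (deriv f)) (Set.Ioo (p i) (p (i + 1))) :=
    fun i hi => (hd1 i hi).deriv_of_isOpen isOpen_Ioo (by norm_num)
  have hd3c : ∀ i < n, ContinuousOn (deriv (deriv (deriv f))) (Set.Ioo (p i) (p (i + 1))) :=
    fun i hi => (ContDiffOn.deriv_of_isOpen (m := 0) (hd2 i hi) isOpen_Ioo (by norm_num)).continuousOn
  have hHD : ∀ (g : ℝ → ℂ), ∀ i < n, ContDiffOn ℝ 1 g (Set.Ioo (p i) (p (i + 1))) →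
      ∀ y ∈ Set.Ioo (p i) (p (i + 1)), HasDerivAt g (deriv g y) y := by
    intro g i hi hg y hy
    exact ((hg.differentiableOn one_ne_zero).differentiableAt (isOpen_Ioo.mem_nhds hy)).hasDerivAt
  have hHD0 : ∀ i < n, ∀ y ∈ Set.Ioo (p i) (p (i + 1)), HasDerivAt f (deriv f y) y :=
    fun i hi => hHD f i hi ((hf3 i hi).of_le (by norm_num))
  have hHD1 : ∀ i < n, ∀ y ∈ Set.Ioo (p i) (p (i + 1)),
      HasDerivAt (deriv f) (deriv (deriv f) y) y :=
    fun i hi => hHD (deriv f) i hi ((hd1 i hi).of_le (by norm_num))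
  have hHD2 : ∀ i < n, ∀ y ∈ Set.Ioo (p i) (p (i + 1)),
      HasDerivAt (deriv (deriv f)) (deriv (deriv (deriv f)) y) y :=
    fun i hi => hHD (deriv (deriv f)) i hi (hd2 i hi)
  -- periodicity of derivatives
  have hperD : ∀ (g : ℝ → ℂ), (∀ y, g (y + 2 * L) = g y) →
      ∀ y, deriv g (y + 2 * L) = deriv g y := by
    intro g hg y
    have h : (fun z => g (z + 2 * L)) = g := funext hg
    calc deriv g (y + 2 * L) = deriv (fun z => g (z + 2 * L)) y :=
          (deriv_comp_add_const g (2 * L) y).symm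
      _ = deriv g y := by rw [h]
  have hper1 : ∀ y, deriv f (y + 2 * L) = deriv f y := hperD f hper
  have hper2 : ∀ y, deriv (deriv f) (y + 2 * L) = deriv (deriv f) y := hperD _ hper1
  -- left-limit transfer by periodicity
  have htransL : ∀ (g : ℝ → ℂ), (∀ y, g (y + 2 * L) = g y) → ∀ (t : ℝ) (l : ℂ),
      Tendsto g (𝓝[<] t) (𝓝 l) → Tendsto g (𝓝[<] (t + 2 * L)) (𝓝 l) := by
    intro g hg t l hl
    have hmap : Tendsto (fun z : ℝ => z - 2 * L) (𝓝[<] (t + 2 * L)) (𝓝[<] t) := by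
      apply tendsto_nhdsWithin_of_tendsto_nhds_of_eventually_within
      · have : Tendsto (fun z : ℝ => z - 2 * L) (𝓝 (t + 2 * L)) (𝓝 (t + 2 * L - 2 * L)) :=
          (continuous_id.sub continuous_const).tendsto _
        simpa using this.mono_left nhdsWithin_le_nhds
      · filter_upwards [self_mem_nhdsWithin] with z hz
        simp only [Set.mem_Iio] at hz ⊢
        linarith
    exact (hl.comp hmap).congr fun z => by simpa using (hg (z - 2 * L)).symm
  -- membership helpers for hlim
  have memf : f ∈ ({f, deriv f, deriv (deriv f), deriv (deriv (deriv f))} : Set (ℝ → ℂ)) :=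
    Set.mem_insert _ _
  have memd1 : deriv f ∈ ({f, deriv f, deriv (deriv f), deriv (deriv (deriv f))} : Set (ℝ → ℂ)) :=
    Set.mem_insert_iff.mpr (Or.inr (Set.mem_insert _ _))
  have memd2 : deriv (deriv f) ∈
      ({f, deriv f, deriv (deriv f), deriv (deriv (deriv f))} : Set (ℝ → ℂ)) :=
    Set.mem_insert_iff.mpr (Or.inr (Set.mem_insert_iff.mpr (Or.inr (Set.mem_insert _ _))))
  have memd3 : deriv (deriv (deriv f)) ∈
      ({f, deriv f, deriv (deriv f), deriv (deriv (deriv f))} : Set (ℝ → ℂ)) :=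
    Set.mem_insert_iff.mpr (Or.inr (Set.mem_insert_iff.mpr (Or.inr
      (Set.mem_insert_iff.mpr (Or.inr rfl)))))
  have hxD : ∀ j : Fin n, x j ∈ D := by
    intro j; rw [hD]; exact ⟨j, 0, by simp⟩
  -- limit data at the points x j
  have hmd' : ∀ j : Fin n, ∃ m : ℂ, Tendsto (deriv f) (𝓝[<] (x j)) (𝓝 m) ∧
      Tendsto (deriv f) (𝓝[>] (x j)) (𝓝 m) := fun j => hderiv_match _ (hxD j)
  choose md hmdl hmdr using hmd'
  have h2' : ∀ j : Fin n, ∃ l r : ℂ, Tendsto (deriv (deriv f)) (𝓝[<] (x j)) (𝓝 l) ∧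
      Tendsto (deriv (deriv f)) (𝓝[>] (x j)) (𝓝 r) := by
    intro j
    obtain ⟨⟨l, hl⟩, ⟨r, hr⟩⟩ := hlim (x j) (hxD j) _ memd2
    exact ⟨l, r, hl, hr⟩
  choose l2 r2 hl2 hr2 using h2'
  have h3' : ∀ j : Fin n, ∃ l r : ℂ, Tendsto (deriv (deriv (deriv f))) (𝓝[<] (x j)) (𝓝 l) ∧
      Tendsto (deriv (deriv (deriv f))) (𝓝[>] (x j)) (𝓝 r) := by
    intro j
    obtain ⟨⟨l, hl⟩, ⟨r, hr⟩⟩ := hlim (x j) (hxD j) _ memd3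
    exact ⟨l, r, hl, hr⟩
  choose l3 r3 hl3 hr3 using h3'
  -- limits at p n (right-side junk values, and left limit of deriv³)
  obtain ⟨-, ⟨r0n, hr0n⟩⟩ := hlim (p n) (hmemD n le_rfl) f memf
  obtain ⟨-, ⟨r1n, hr1n⟩⟩ := hlim (p n) (hmemD n le_rfl) _ memd1
  obtain ⟨-, ⟨r2n, hr2n⟩⟩ := hlim (p n) (hmemD n le_rfl) _ memd2
  obtain ⟨⟨l3n, hl3n⟩, ⟨r3n, hr3n⟩⟩ := hlim (p n) (hmemD n le_rfl) _ memd3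
  -- ℕ-indexed boundary value arrays
  set Gl0 : ℕ → ℂ := fun i => if h : i < n then fl ⟨i, h⟩ else fl x0 with hGl0
  set Gr0 : ℕ → ℂ := fun i => if h : i < n then fr ⟨i, h⟩ else r0n with hGr0
  set Gl1 : ℕ → ℂ := fun i => if h : i < n then md ⟨i, h⟩ else md x0 with hGl1
  set Gr1 : ℕ → ℂ := fun i => if h : i < n then md ⟨i, h⟩ else r1n with hGr1
  set Gl2 : ℕ → ℂ := fun i => if h : i < n then l2 ⟨i, h⟩ else l2 x0 with hGl2
  set Gr2 : ℕ → ℂ := fun i => if h : i < n then r2 ⟨i, h⟩ else r2n with hGr2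
  set Gl3 : ℕ → ℂ := fun i => if h : i < n then l3 ⟨i, h⟩ else l3n with hGl3
  set Gr3 : ℕ → ℂ := fun i => if h : i < n then r3 ⟨i, h⟩ else r3n with hGr3
  -- tendsto facts
  have hpi : ∀ i (h : i < n), p i = x ⟨i, h⟩ := fun i h => by simp [hpdef, dif_pos h]
  have mkT : ∀ (g : ℝ → ℂ) (G : ℕ → ℂ) (vl : Fin n → ℂ),
      (G = fun i => if h : i < n then vl ⟨i, h⟩ else vl x0) →
      (∀ y, g (y + 2 * L) = g y) →
      (∀ j, Tendsto g (𝓝[<] (x j)) (𝓝 (vl j))) →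
      ∀ i ≤ n, Tendsto g (𝓝[<] (p i)) (𝓝 (G i)) := by
    intro g G vl hG hgper hvl i hi
    by_cases h : i < n
    · rw [hG]; simp only [dif_pos h]; rw [hpi i h]; exact hvl ⟨i, h⟩
    · have : i = n := le_antisymm hi (not_lt.mp h)
      subst this
      rw [hG]; simp only [dif_neg h]; rw [hpn]
      exact htransL g hgper _ _ (hvl x0)
  have mkTr : ∀ (g : ℝ → ℂ) (G : ℕ → ℂ) (vr : Fin n → ℂ) (vn : ℂ),
      (G = fun i => if h : i < n then vr ⟨i, h⟩ else vn) →
      (Tendsto g (𝓝[>] (p n)) (𝓝 vn)) →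
      (∀ j, Tendsto g (𝓝[>] (x j)) (𝓝 (vr j))) →
      ∀ i ≤ n, Tendsto g (𝓝[>] (p i)) (𝓝 (G i)) := by
    intro g G vr vn hG hvn hvr i hi
    by_cases h : i < n
    · rw [hG]; simp only [dif_pos h]; rw [hpi i h]; exact hvr ⟨i, h⟩
    · have : i = n := le_antisymm hi (not_lt.mp h)
      subst this
      rw [hG]; simp only [dif_neg h]; exact hvn
  have hTl0 := mkT f Gl0 fl hGl0 hper hfl
  have hTr0 := mkTr f Gr0 fr r0n hGr0 hr0n hfr
  have hTl1 := mkT (deriv f) Gl1 md hGl1 hper1 hmdl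
  have hTr1 := mkTr (deriv f) Gr1 md r1n hGr1 hr1n hmdr
  have hTl2 := mkT (deriv (deriv f)) Gl2 l2 hGl2 hper2 hl2
  have hTr2 := mkTr (deriv (deriv f)) Gr2 r2 r2n hGr2 hr2n hr2
  have hTl3 : ∀ i ≤ n, Tendsto (deriv (deriv (deriv f))) (𝓝[<] (p i)) (𝓝 (Gl3 i)) := by
    intro i hi
    by_cases h : i < n
    · rw [hGl3]; simp only [dif_pos h]; rw [hpi i h]; exact hl3 ⟨i, h⟩
    · have : i = n := le_antisymm hi (not_lt.mp h)
      subst this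
      rw [hGl3]; simp only [dif_neg h]; exact hl3n
  have hTr3 := mkTr (deriv (deriv (deriv f))) Gr3 r3 r3n hGr3 hr3n hr3
  -- constants
  set B0 : ℝ := ∑ i ∈ Finset.range n, (‖Gl2 (i + 1)‖ + ‖Gr2 i‖) with hB0def
  set M : ℝ := ∑ i ∈ Finset.range n,
      ∫ y in (p i)..(p (i + 1)), ‖deriv (deriv (deriv f)) y‖ with hMdef
  have hB0 : 0 ≤ B0 := Finset.sum_nonneg fun i _ => by positivity
  have hM : 0 ≤ M := by
    apply Finset.sum_nonneg
    intro i hi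
    exact intervalIntegral.integral_nonneg (hplt i (Finset.mem_range.mp hi)).le
      (fun y _ => norm_nonneg _)
  clear_value x0 p Gl0 Gr0 Gl1 Gr1 Gl2 Gr2 Gl3 Gr3 B0 M
  refine ⟨L ^ 2 * (B0 + M + 1) / (2 * Real.pi ^ 3), by positivity, ?_⟩
  intro k hk
  have hkR : ((k : ℝ)) ≠ 0 := Int.cast_ne_zero.mpr hk
  have hkC : ((k : ℂ)) ≠ 0 := Int.cast_ne_zero.mpr hk
  have hpi_pos : (0 : ℝ) < Real.pi := Real.pi_pos
  have hpiC : ((Real.pi : ℝ) : ℂ) ≠ 0 := Complex.ofReal_ne_zero.mpr (ne_of_gt hpi_pos)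
  have hLC : ((L : ℝ) : ℂ) ≠ 0 := Complex.ofReal_ne_zero.mpr hL0
  set c : ℂ := -(↑Real.pi * Complex.I * ↑k) / ↑L with hcdef
  have hc : c ≠ 0 := by
    rw [hcdef]
    exact div_ne_zero (neg_ne_zero.mpr (mul_ne_zero (mul_ne_zero hpiC Complex.I_ne_zero) hkC)) hLC
  have heq : ∀ y : ℝ, -(↑Real.pi * Complex.I * ↑k * ↑y) / ↑L = c * ↑y := fun y => by
    rw [hcdef]; ring
  have hnormc : ‖c‖ = Real.pi * |(k : ℝ)| / L := by
    rw [hcdef, norm_div, norm_neg, norm_mul, norm_mul]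
    simp [Complex.norm_real, Complex.norm_I, Real.norm_eq_abs, abs_of_pos hpi_pos,
      abs_of_pos hL, Complex.norm_intCast]
  have hnorme : ∀ t : ℝ, ‖Complex.exp (c * (t : ℂ))‖ = 1 := by
    intro t
    have h : c * (t : ℂ) = ((-(Real.pi * k * t) / L : ℝ) : ℂ) * Complex.I := by
      rw [hcdef]; push_cast; ring
    rw [h, Complex.norm_exp_ofReal_mul_I]
  have hexp2L : Complex.exp (c * ((2 * L : ℝ) : ℂ)) = 1 := by
    have h : c * ((2 * L : ℝ) : ℂ) = ((-k : ℤ) : ℂ) * (2 * ↑Real.pi * Complex.I) := by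
      rw [hcdef]; push_cast; field_simp
    rw [h, Complex.exp_int_mul_two_pi_mul_I]
  have hEper : ∀ t : ℝ, Complex.exp (c * ((t + 2 * L : ℝ) : ℂ)) = Complex.exp (c * (t : ℂ)) := by
    intro t
    have h : ((t + 2 * L : ℝ) : ℂ) = (t : ℂ) + ((2 * L : ℝ) : ℂ) := by push_cast; ring
    rw [h, mul_add, Complex.exp_add, hexp2L, mul_one]
  have hpn0 : p n = p 0 + 2 * L := by rw [hpn, hp0]
  have hepn : Complex.exp (c * ((p n : ℝ) : ℂ)) = Complex.exp (c * ((p 0 : ℝ) : ℂ)) := by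
    rw [hpn0]; exact hEper (p 0)
  -- the three integration-by-parts identities
  have E0 := ibp_chain n p hplt f c hHD0 (fun i hi => (hd1 i hi).continuousOn)
    Gl0 Gr0 Gl1 Gr1 hTl0 hTr0 hTl1 hTr1
  have E1 := ibp_chain n p hplt (deriv f) c hHD1 (fun i hi => (hd2 i hi).continuousOn)
    Gl1 Gr1 Gl2 Gr2 hTl1 hTr1 hTl2 hTr2
  have E2 := ibp_chain n p hplt (deriv (deriv f)) c hHD2 hd3c
    Gl2 Gr2 Gl3 Gr3 hTl2 hTr2 hTl3 hTr3
  set I0 : ℂ := ∫ y in (p 0)..(p n), f y * Complex.exp (c * y) with hI0d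
  set I1 : ℂ := ∫ y in (p 0)..(p n), deriv f y * Complex.exp (c * y) with hI1d
  set I2 : ℂ := ∫ y in (p 0)..(p n), deriv (deriv f) y * Complex.exp (c * y) with hI2d
  set I3 : ℂ := ∫ y in (p 0)..(p n), deriv (deriv (deriv f)) y * Complex.exp (c * y) with hI3d
  set S : ℂ := ∑ j, (fr j - fl j) *
      Complex.exp (-(↑Real.pi * Complex.I * ↑k * ↑(x j)) / ↑L) with hSdef
  set Bk : ℂ := ∑ i ∈ Finset.range n,
      (Gl2 (i + 1) * Complex.exp (c * (p (i + 1))) - Gr2 i * Complex.exp (c * (p i))) with hBkd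
  clear_value c I0 I1 I2 I3 S Bk
  -- boundary sums
  have hsum0 : (∑ i ∈ Finset.range n,
      (Gl0 (i + 1) * Complex.exp (c * (p (i + 1))) - Gr0 i * Complex.exp (c * (p i)))) = -S := by
    have hA : (fun i => Gl0 i * Complex.exp (c * (p i))) n
        = (fun i => Gl0 i * Complex.exp (c * (p i))) 0 := by
      simp only
      rw [hepn]
      congr 1
      rw [hGl0]
      simp only [dif_neg (lt_irrefl n), dif_pos hn, hx0]
    rw [Finset.sum_sub_distrib,
      sum_shift_eq (fun i => Gl0 i * Complex.exp (c * (p i))) hA,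
      ← Finset.sum_sub_distrib]
    have hterm : ∀ j : Fin n,
        Gl0 (j : ℕ) * Complex.exp (c * (p (j : ℕ))) - Gr0 (j : ℕ) * Complex.exp (c * (p (j : ℕ)))
        = -((fr j - fl j) * Complex.exp (-(↑Real.pi * Complex.I * ↑k * ↑(x j)) / ↑L)) := by
      intro j
      rw [heq (x j), hGl0, hGr0]
      simp only [dif_pos j.isLt]
      rw [hpi _ j.isLt]
      simp only [Fin.eta]
      ring
    rw [hSdef, ← Fin.sum_univ_eq_sum_range
      (fun i => Gl0 i * Complex.exp (c * (p i)) - Gr0 i * Complex.exp (c * (p i))) n]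
    rw [Finset.sum_congr rfl (fun j _ => hterm j)]
    rw [Finset.sum_neg_distrib]
  have hsum1 : (∑ i ∈ Finset.range n,
      (Gl1 (i + 1) * Complex.exp (c * (p (i + 1))) - Gr1 i * Complex.exp (c * (p i)))) = 0 := by
    have hA : (fun i => Gl1 i * Complex.exp (c * (p i))) n
        = (fun i => Gl1 i * Complex.exp (c * (p i))) 0 := by
      simp only
      rw [hepn]
      congr 1
      rw [hGl1]
      simp only [dif_neg (lt_irrefl n), dif_pos hn, hx0]
    rw [Finset.sum_sub_distrib,
      sum_shift_eq (fun i => Gl1 i * Complex.exp (c * (p i))) hA, sub_eq_zero]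
    apply Finset.sum_congr rfl
    intro i hi
    congr 2
    rw [hGl1, hGr1]
    simp only [dif_pos (Finset.mem_range.mp hi)]
  rw [hsum0] at E0
  rw [hsum1] at E1
  have hI0c : c ^ 3 * I0 = -(S * c ^ 2) + (Bk - I3) := by
    linear_combination c ^ 2 * E0 - c * E1 + E2
  -- fourier coefficient via the shifted integral
  have hfour : fourierCoeff2L L f k = (1 / (2 * L : ℂ)) * I0 := by
    rw [fourierCoeff2L]
    congr 1
    have hper0 : Function.Periodic (fun y : ℝ => f y * Complex.exp (c * y)) (2 * L) := by
      intro y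
      simp only
      rw [hper, hEper]
    have hshift := hper0.intervalIntegral_add_eq 0 (p 0)
    simp only [zero_add] at hshift
    calc ∫ x in (0:ℝ)..(2 * L), f x * Complex.exp (-(↑Real.pi * Complex.I * ↑k * ↑x) / ↑L)
        = ∫ x in (0:ℝ)..(2 * L), f x * Complex.exp (c * x) := by
          apply intervalIntegral.integral_congr
          intro y _
          simp only [heq]
      _ = ∫ y in (p 0)..(p 0 + 2 * L), f y * Complex.exp (c * y) := hshift
      _ = I0 := by rw [hI0d, hpn0]
  have hck : (2 * (Real.pi : ℂ) * Complex.I * (k : ℂ)) = -(2 * (L : ℂ) * c) := by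
    rw [hcdef]; field_simp
  have key : fourierCoeff2L L f k - 1 / (2 * ↑Real.pi * Complex.I * ↑k) * S
      = (Bk - I3) / (2 * (L : ℂ) * c ^ 3) := by
    rw [hck]
    exact key_algebra c _ S I0 Bk I3 _ hc hLC hI0c hfour
  rw [key]
  -- norm bounds
  have hBkb : ‖Bk‖ ≤ B0 := by
    rw [hBkd, hB0def]
    refine (norm_sum_le _ _).trans ?_
    apply Finset.sum_le_sum
    intro i hi
    refine (norm_sub_le _ _).trans ?_
    rw [norm_mul, norm_mul, hnorme, hnorme, mul_one, mul_one]
  have hI3b : ‖I3‖ ≤ M := by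
    have hint : ∀ i < n, IntervalIntegrable
        (fun y => deriv (deriv (deriv f)) y * Complex.exp (c * y)) volume (p i) (p (i + 1)) := by
      intro i hi
      apply tendsto_intervalIntegrable (hplt i hi)
      · exact (hd3c i hi).mul
          (fun y _ => ((hasDerivAt_cexp_mul c y).continuousAt.continuousWithinAt))
      · exact (hTr3 i hi.le).mul
          (((hasDerivAt_cexp_mul c (p i)).continuousAt.tendsto).mono_left nhdsWithin_le_nhds)
      · exact (hTl3 (i + 1) hi).mul
          (((hasDerivAt_cexp_mul c (p (i + 1))).continuousAt.tendsto).mono_left nhdsWithin_le_nhds)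
    have hsplit := intervalIntegral.sum_integral_adjacent_intervals (μ := volume)
        (a := p) (n := n) (fun i hi => hint i hi)
    rw [hI3d, ← hsplit, hMdef]
    refine (norm_sum_le _ _).trans (Finset.sum_le_sum ?_)
    intro i hi
    have hi' := Finset.mem_range.mp hi
    refine (intervalIntegral.norm_integral_le_integral_norm (hplt i hi').le).trans (le_of_eq ?_)
    apply intervalIntegral.integral_congr
    intro y _
    simp only [norm_mul, hnorme, mul_one]
  have hnum : ‖Bk - I3‖ ≤ B0 + M := (norm_sub_le _ _).trans (add_le_add hBkb hI3b)
  have hkpos : (0 : ℝ) < |(k : ℝ)| := abs_pos.mpr hkR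
  have hden : ‖(2 * (L : ℂ) * c ^ 3 : ℂ)‖ = 2 * L * (Real.pi * |(k : ℝ)| / L) ^ 3 := by
    rw [norm_mul, norm_mul, norm_pow, hnormc]
    simp [Complex.norm_real, Real.norm_eq_abs, abs_of_pos hL]
  calc ‖(Bk - I3) / (2 * (L : ℂ) * c ^ 3)‖
      = ‖Bk - I3‖ / ‖(2 * (L : ℂ) * c ^ 3 : ℂ)‖ := norm_div _ _
    _ ≤ (B0 + M) / ‖(2 * (L : ℂ) * c ^ 3 : ℂ)‖ := by gcongr
    _ = (L ^ 2 * (B0 + M) / (2 * Real.pi ^ 3)) / |(k : ℝ)| ^ 3 := by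
        rw [hden]
        field_simp
    _ ≤ L ^ 2 * (B0 + M + 1) / (2 * Real.pi ^ 3) / |(k : ℝ)| ^ 3 := by
        have h9 : L ^ 2 * (B0 + M) ≤ L ^ 2 * (B0 + M + 1) := by nlinarith
        have hpk : (0:ℝ) < 2 * Real.pi ^ 3 := by positivity
        have hk3 : (0:ℝ) < |(k : ℝ)| ^ 3 := by positivity
        gcongr ?_ / |(k : ℝ)| ^ 3
        gcongr ?_ / (2 * Real.pi ^ 3)
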